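/- For every ε ∈ (0,1], q ∈ [1,∞), and x ∈ ℝ^p, the εq-norm satisfies ‖x‖_∞ ≤ ‖x‖_{εq} ≤ p^{1/q} ‖x‖_∞ / (p^{1/q}(1−ε) + ε), where ‖x‖_∞ = max_i |x_i|. Moreover both inequalities are attained: the lower bound holds with equality when x is a standard unit vector, and the upper bound holds with equality when x is the all-ones vector. -/

import Mathlib

/-- The supremum (ℓ_∞) norm on `ℝ^p`. -/
noncomputable def linfNorm (p : ℕ) (x : Fin p → ℝ) : ℝ :=
  ⨆ i : Fin p, |x i|

/-- Let `N` be the εq-norm.  Then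
`‖x‖_∞ ≤ N x ≤ p^{1/q} ‖x‖_∞ / (p^{1/q}(1-ε)+ε)` for all `x`, the lower bound is
attained at every standard unit vector, and the upper bound is attained at the
all-ones vector. -/
theorem epsq_norm_linf_bounds (p : ℕ) (ε q : ℝ)
    (hε0 : 0 < ε) (hε1 : ε ≤ 1) (hq : 1 ≤ q)
    (N : (Fin p → ℝ) → ℝ)
    (hN0 : ∀ x : Fin p → ℝ, 0 ≤ N x)
    (hNeq : ∀ x : Fin p → ℝ,
      ∑ i : Fin p, (max (|x i| - (1 - ε) * N x) 0) ^ q = (ε * N x) ^ q) :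
    (∀ x : Fin p → ℝ,
      linfNorm p x ≤ N x ∧
      N x ≤ (p : ℝ) ^ (1 / q) * linfNorm p x / ((p : ℝ) ^ (1 / q) * (1 - ε) + ε)) ∧
    (∀ i : Fin p, N (Pi.single i 1) = linfNorm p (Pi.single i 1)) ∧
    (N (fun _ => 1) =
      (p : ℝ) ^ (1 / q) * linfNorm p (fun _ => 1) /
        ((p : ℝ) ^ (1 / q) * (1 - ε) + ε)) := by
  have hq0 : (0 : ℝ) < q := lt_of_lt_of_le one_pos hq
  have hq0' : q ≠ 0 := ne_of_gt hq0
  have hqi : (0 : ℝ) < 1 / q := by positivity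
  by_cases hp : p = 0
  · -- trivial case p = 0
    subst hp
    have hNz : ∀ x : Fin 0 → ℝ, N x = 0 := by
      intro x
      have h := hNeq x
      rw [Finset.univ_eq_empty, Finset.sum_empty] at h
      have h2 : ε * N x = 0 := by
        by_contra hne
        have hpos : 0 < ε * N x :=
          lt_of_le_of_ne (mul_nonneg (le_of_lt hε0) (hN0 x)) (Ne.symm hne)
        have := Real.rpow_pos_of_pos hpos q
        linarith
      exact (mul_eq_zero.mp h2).resolve_left (ne_of_gt hε0)
    have hlz : ∀ x : Fin 0 → ℝ, linfNorm 0 x = 0 := by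
      intro x
      simp [linfNorm, Real.iSup_of_isEmpty]
    have hP0 : ((0 : ℕ) : ℝ) ^ (1 / q) = 0 := by
      rw [Nat.cast_zero, Real.zero_rpow (ne_of_gt hqi)]
    refine ⟨fun x => ?_, fun i => i.elim0, ?_⟩
    · rw [hNz x, hlz x, hP0]
      constructor
      · exact le_refl 0
      · rw [mul_zero, zero_div]
    · rw [hNz _, hlz _, hP0, mul_zero, zero_div]
  · -- main case p ≥ 1
    have hp1 : 1 ≤ p := Nat.one_le_iff_ne_zero.mpr hp
    haveI : Nonempty (Fin p) := ⟨⟨0, hp1⟩⟩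
    set P : ℝ := (p : ℝ) ^ (1 / q) with hPdef
    have hpR : (1 : ℝ) ≤ (p : ℝ) := by exact_mod_cast hp1
    have hP1 : 1 ≤ P := Real.one_le_rpow hpR (le_of_lt hqi)
    have hP0 : 0 < P := lt_of_lt_of_le one_pos hP1
    have hPq : P ^ q = (p : ℝ) := by
      rw [hPdef, ← Real.rpow_mul (Nat.cast_nonneg p), one_div, inv_mul_cancel₀ hq0',
        Real.rpow_one]
    set D : ℝ := P * (1 - ε) + ε with hDdef
    have hD1 : 1 ≤ D := by nlinarith
    have hD0 : 0 < D := lt_of_lt_of_le one_pos hD1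
    -- each coordinate is bounded by the sup norm
    have hbdd : ∀ x : Fin p → ℝ, ∀ i, |x i| ≤ linfNorm p x := by
      intro x i
      exact le_ciSup (f := fun j => |x j|)
        (Set.Finite.bddAbove (Set.finite_range fun j => |x j|)) i
    have hM0 : ∀ x : Fin p → ℝ, 0 ≤ linfNorm p x := fun x =>
      le_trans (abs_nonneg _) (hbdd x (Classical.arbitrary _))
    -- lower bound: each |x i| ≤ N x
    have hlow : ∀ x : Fin p → ℝ, ∀ i, |x i| ≤ N x := by
      intro x i
      by_contra hcon
      push_neg at hcon
      have h1 : ε * N x < |x i| - (1 - ε) * N x := by nlinarith [hN0 x]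
      have h2 : (ε * N x) ^ q < (max (|x i| - (1 - ε) * N x) 0) ^ q := by
        apply Real.rpow_lt_rpow (mul_nonneg (le_of_lt hε0) (hN0 x)) _ hq0
        exact lt_of_lt_of_le h1 (le_max_left _ _)
      have h3 : (max (|x i| - (1 - ε) * N x) 0) ^ q ≤
          ∑ j : Fin p, (max (|x j| - (1 - ε) * N x) 0) ^ q := by
        apply Finset.single_le_sum (f := fun j => (max (|x j| - (1 - ε) * N x) 0) ^ q)
          (fun j _ => Real.rpow_nonneg (le_max_right _ _) q) (Finset.mem_univ i)
      rw [hNeq x] at h3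
      linarith
    have hlinf_le : ∀ x : Fin p → ℝ, linfNorm p x ≤ N x := fun x =>
      ciSup_le (hlow x)
    -- upper bound
    have hupp : ∀ x : Fin p → ℝ, N x ≤ P * linfNorm p x / D := by
      intro x
      set M := linfNorm p x with hMdef
      have key : ε * N x ≤ P * max (M - (1 - ε) * N x) 0 := by
        have h1 : (ε * N x) ^ q ≤ (p : ℝ) * (max (M - (1 - ε) * N x) 0) ^ q := by
          rw [← hNeq x]
          have : ∀ j : Fin p, (max (|x j| - (1 - ε) * N x) 0) ^ q ≤
              (max (M - (1 - ε) * N x) 0) ^ q := by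
            intro j
            apply Real.rpow_le_rpow (le_max_right _ _) _ (le_of_lt hq0)
            exact max_le_max (by linarith [hbdd x j]) (le_refl 0)
          calc ∑ j : Fin p, (max (|x j| - (1 - ε) * N x) 0) ^ q
              ≤ ∑ _j : Fin p, (max (M - (1 - ε) * N x) 0) ^ q :=
                Finset.sum_le_sum (fun j _ => this j)
            _ = (p : ℝ) * (max (M - (1 - ε) * N x) 0) ^ q := by
                rw [Finset.sum_const, Finset.card_univ, Fintype.card_fin, nsmul_eq_mul]
        have h2 : (ε * N x) ^ q ≤ (P * max (M - (1 - ε) * N x) 0) ^ q := by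
          rw [Real.mul_rpow (le_of_lt hP0) (le_max_right _ _), hPq]
          exact h1
        exact (Real.rpow_le_rpow_iff (mul_nonneg (le_of_lt hε0) (hN0 x))
          (mul_nonneg (le_of_lt hP0) (le_max_right _ _)) hq0).mp h2
      have hND : N x * D ≤ P * M := by
        rcases le_or_gt (M - (1 - ε) * N x) 0 with hc | hc
        · rw [max_eq_right hc] at key
          have : N x = 0 := by nlinarith [hN0 x]
          rw [this, zero_mul]
          exact mul_nonneg (le_of_lt hP0) (hM0 x)
        · rw [max_eq_left (le_of_lt hc)] at key
          show N x * (P * (1 - ε) + ε) ≤ P * M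
          nlinarith [key]
      rw [le_div_iff₀ hD0]
      exact hND
    refine ⟨fun x => ⟨hlinf_le x, hupp x⟩, ?_, ?_⟩
    · -- unit vectors
      intro i
      have hlinf1 : linfNorm p (Pi.single i 1) = 1 := by
        apply le_antisymm
        · apply ciSup_le
          intro j
          rcases eq_or_ne j i with h | h
          · subst h; simp
          · simp [Pi.single_eq_of_ne h]
        · have := hbdd (Pi.single i 1) i
          simpa using this
      rw [hlinf1]
      set n := N (Pi.single i 1) with hndef
      have hn1 : 1 ≤ n := by
        have := hlinf_le (Pi.single i 1)
        rwa [hlinf1] at this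
      have heq := hNeq (Pi.single i 1)
      have hsum : ∑ j : Fin p, (max (|(Pi.single i 1 : Fin p → ℝ) j| - (1 - ε) * n) 0) ^ q
          = (max (1 - (1 - ε) * n) 0) ^ q := by
        rw [Finset.sum_eq_single i]
        · simp
        · intro j _ hj
          rw [Pi.single_eq_of_ne hj, abs_zero, zero_sub,
            max_eq_right (by nlinarith), Real.zero_rpow hq0']
        · intro h; exact absurd (Finset.mem_univ i) h
      rw [hsum] at heq
      have heq2 : max (1 - (1 - ε) * n) 0 = ε * n :=
        Real.rpow_left_injOn hq0' (show (0:ℝ) ≤ max (1 - (1 - ε) * n) 0 from le_max_right _ _)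
          (mul_nonneg (le_of_lt hε0) (le_trans zero_le_one hn1)) heq
      have hεn : 0 < ε * n := mul_pos hε0 (lt_of_lt_of_le one_pos hn1)
      rcases le_or_gt (1 - (1 - ε) * n) 0 with hc | hc
      · rw [max_eq_right hc] at heq2; linarith
      · rw [max_eq_left (le_of_lt hc)] at heq2
        linarith
    · -- all-ones vector
      have hlinf1 : linfNorm p (fun _ => (1:ℝ)) = 1 := by
        unfold linfNorm
        simp only [abs_one]
        exact ciSup_const
      rw [hlinf1, mul_one]
      set n := N (fun _ => (1:ℝ)) with hndef
      have hn1 : 1 ≤ n := by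
        have := hlinf_le (fun _ => (1:ℝ))
        rwa [hlinf1] at this
      have heq := hNeq (fun _ => (1:ℝ))
      have hsum : ∑ _j : Fin p, (max (|(1:ℝ)| - (1 - ε) * n) 0) ^ q
          = (p : ℝ) * (max (1 - (1 - ε) * n) 0) ^ q := by
        rw [Finset.sum_const, Finset.card_univ, Fintype.card_fin, nsmul_eq_mul, abs_one]
      rw [hsum] at heq
      have heq2 : (P * max (1 - (1 - ε) * n) 0) ^ q = (ε * n) ^ q := by
        rw [Real.mul_rpow (le_of_lt hP0) (le_max_right _ _), hPq]
        exact heq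
      have heq3 : P * max (1 - (1 - ε) * n) 0 = ε * n :=
        Real.rpow_left_injOn hq0' (show (0:ℝ) ≤ P * max (1 - (1 - ε) * n) 0 from mul_nonneg (le_of_lt hP0) (le_max_right _ _))
          (mul_nonneg (le_of_lt hε0) (le_trans zero_le_one hn1)) heq2
      have hεn : 0 < ε * n := mul_pos hε0 (lt_of_lt_of_le one_pos hn1)
      have hc : 0 < 1 - (1 - ε) * n := by
        by_contra hcc
        push_neg at hcc
        rw [max_eq_right hcc, mul_zero] at heq3
        linarith
      rw [max_eq_left (le_of_lt hc)] at heq3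
      have hnD : n * D = P := by rw [hDdef]; linear_combination -heq3
      rw [eq_div_iff (ne_of_gt hD0)]
      exact hnD
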